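/- The path on nine vertices P9 is not a Maya-Tupi graph; consequently, every tree that is a Maya-Tupi graph has diameter at most 7. -/

import Mathlib

open scoped Classical

/-- Number of neighbours of `v` inside the set `S`. -/
noncomputable def adjCount {V : Type*} (G : SimpleGraph V) (S : Finset V) (v : V) : ℕ :=
  (S.filter (fun u => G.Adj v u)).card

/-- A graph is Maya-Tupi if its vertex set splits into `A` with min degree `≥ |A| - 2`
inside `A`, and `B` with max degree `≤ 1` inside `B`. -/
def IsMayaTupi {V : Type*} [Fintype V] (G : SimpleGraph V) : Prop :=
  ∃ A B : Finset V, A ∪ B = Finset.univ ∧ Disjoint A B ∧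
    (∀ v ∈ A, A.card - 2 ≤ adjCount G A v) ∧
    (∀ v ∈ B, adjCount G B v ≤ 1)
/-- Graph on `Fin n` with the given edge list. -/
def graphOfList (n : ℕ) (l : List (ℕ × ℕ)) : SimpleGraph (Fin n) :=
  SimpleGraph.fromRel (fun a b => ((a : ℕ), (b : ℕ)) ∈ l)

/-- `G` contains no induced subgraph isomorphic to `H`. -/
def Free {α : Type*} {V : Type*} (H : SimpleGraph α) (G : SimpleGraph V) : Prop :=
  IsEmpty (H ↪g G)

def twoP3 : SimpleGraph (Fin 6) := graphOfList 6 [(0,1),(1,2),(3,4),(4,5)]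
def p3PlusK3 : SimpleGraph (Fin 6) := graphOfList 6 [(0,1),(1,2),(3,4),(4,5),(3,5)]
def twoK3 : SimpleGraph (Fin 6) := graphOfList 6 [(0,1),(1,2),(0,2),(3,4),(4,5),(3,5)]
def cycle4 : SimpleGraph (Fin 4) := graphOfList 4 [(0,1),(1,2),(2,3),(3,0)]
def cycle5 : SimpleGraph (Fin 5) := graphOfList 5 [(0,1),(1,2),(2,3),(3,4),(4,0)]
def cycle6 : SimpleGraph (Fin 6) := graphOfList 6 [(0,1),(1,2),(2,3),(3,4),(4,5),(5,0)]

/-- `G` is `{2P3, P3+K3, 2K3, C4, C5, C6}`-free. -/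
def FFree {V : Type*} (G : SimpleGraph V) : Prop :=
  Free twoP3 G ∧ Free p3PlusK3 G ∧ Free twoK3 G ∧ Free cycle4 G ∧ Free cycle5 G ∧ Free cycle6 G

/-- `v1 v2 v3 v4` form an induced `2K2` with edges `v1v2` and `v3v4`. -/
def Induced2K2 {V : Type*} (G : SimpleGraph V) (v1 v2 v3 v4 : V) : Prop :=
  v1 ≠ v2 ∧ v1 ≠ v3 ∧ v1 ≠ v4 ∧ v2 ≠ v3 ∧ v2 ≠ v4 ∧ v3 ≠ v4 ∧
  G.Adj v1 v2 ∧ G.Adj v3 v4 ∧ ¬ G.Adj v1 v3 ∧ ¬ G.Adj v1 v4 ∧ ¬ G.Adj v2 v3 ∧ ¬ G.Adj v2 v4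
def path9 : SimpleGraph (Fin 9) :=
  graphOfList 9 [(0,1),(1,2),(2,3),(3,4),(4,5),(5,6),(6,7),(7,8)]

/- ### Auxiliary results -/

instance path9.decAdj : DecidableRel path9.Adj := fun a b =>
  decidable_of_iff _ (SimpleGraph.fromRel_adj _ a b).symm

lemma path9_adj : ∀ i j : Fin 9, path9.Adj i j ↔ ((i:ℕ)+1 = j ∨ (j:ℕ)+1 = i) := by decide

lemma adjCount_eq {V : Type*} [DecidableEq V] {G : SimpleGraph V} [DecidableRel G.Adj]
    (S : Finset V) (v : V) :
    adjCount G S v = (S.filter (fun u => G.Adj v u)).card := by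
  unfold adjCount
  congr 1
  exact Finset.filter_congr_decidable _ _ _

set_option maxHeartbeats 4000000 in
set_option maxRecDepth 10000 in
lemma path9_aux : ∀ A : Finset (Fin 9),
    ¬ ((∀ v ∈ A, A.card - 2 ≤ (A.filter (fun u => path9.Adj v u)).card) ∧
       (∀ v ∈ Aᶜ, ((Aᶜ).filter (fun u => path9.Adj v u)).card ≤ 1)) := by decide

lemma path9_not_mayaTupi : ¬ IsMayaTupi path9 := by
  rintro ⟨A, B, hU, hD, hA, hB⟩
  have hBc : B = Aᶜ := by
    ext x
    have hx := Finset.eq_univ_iff_forall.mp hU x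
    have hdisj := Finset.disjoint_left.mp hD
    simp only [Finset.mem_compl]
    constructor
    · intro hxB hxA; exact hdisj hxA hxB
    · intro hxA
      simp only [Finset.mem_union] at hx
      rcases hx with h | h
      · exact absurd h hxA
      · exact h
  subst hBc
  refine path9_aux A ⟨?_, ?_⟩
  · intro v hv
    have := hA v hv
    rwa [adjCount_eq] at this
  · intro v hv
    have := hB v hv
    rwa [adjCount_eq] at this

/-- The Maya-Tupi property is inherited by induced subgraphs. -/
lemma mayaTupi_of_embedding {α V : Type*} [Fintype α] [Fintype V]
    {H : SimpleGraph α} {G : SimpleGraph V} (f : H ↪g G)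
    (hG : IsMayaTupi G) : IsMayaTupi H := by
  obtain ⟨A, B, hU, hD, hA, hB⟩ := hG
  refine ⟨Finset.univ.filter (fun a => f a ∈ A), Finset.univ.filter (fun a => f a ∈ B),
    ?_, ?_, ?_, ?_⟩
  · ext a
    have hx := Finset.eq_univ_iff_forall.mp hU (f a)
    simp only [Finset.mem_union] at hx
    simp only [Finset.mem_union, Finset.mem_filter, Finset.mem_univ, true_and]
    tauto
  · rw [Finset.disjoint_left]
    intro a ha hb
    simp only [Finset.mem_filter, Finset.mem_univ, true_and] at ha hb
    exact Finset.disjoint_left.mp hD ha hb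
  · intro v hv
    simp only [Finset.mem_filter, Finset.mem_univ, true_and] at hv
    set A' : Finset α := Finset.univ.filter (fun a => f a ∈ A) with hA'
    have h1 : A.card - 2 ≤ adjCount G A (f v) := hA (f v) hv
    have e1 : adjCount H A' v + (A'.filter (fun u => ¬ H.Adj v u)).card = A'.card := by
      unfold adjCount
      exact Finset.card_filter_add_card_filter_not _
    have e2 : adjCount G A (f v) + (A.filter (fun u => ¬ G.Adj (f v) u)).card = A.card := by
      unfold adjCount
      exact Finset.card_filter_add_card_filter_not _
    have h3 : (A'.filter (fun u => ¬ H.Adj v u)).card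
        ≤ (A.filter (fun u => ¬ G.Adj (f v) u)).card := by
      apply Finset.card_le_card_of_injOn f
      · intro u hu
        simp only [hA', Finset.mem_coe, Finset.mem_filter, Finset.mem_univ, true_and] at hu ⊢
        exact ⟨hu.1, fun h => hu.2 (f.map_adj_iff.mp h)⟩
      · exact Function.Injective.injOn f.injective
    omega
  · intro v hv
    simp only [Finset.mem_filter, Finset.mem_univ, true_and] at hv
    have h1 : adjCount G B (f v) ≤ 1 := hB (f v) hv
    have h2 : adjCount H (Finset.univ.filter (fun a => f a ∈ B)) v ≤ adjCount G B (f v) := by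
      unfold adjCount
      apply Finset.card_le_card_of_injOn f
      · intro u hu
        simp only [Finset.mem_coe, Finset.mem_filter, Finset.mem_univ, true_and] at hu ⊢
        exact ⟨hu.1, f.map_adj_iff.mpr hu.2⟩
      · exact Function.Injective.injOn f.injective
    omega

lemma exists_walk_to_getVert {V : Type*} {G : SimpleGraph V} {u v : V}
    (p : G.Walk u v) (i : ℕ) : ∃ q : G.Walk u (p.getVert i), q.length ≤ i := by
  induction p generalizing i with
  | nil => exact ⟨SimpleGraph.Walk.nil, Nat.zero_le _⟩
  | cons h q ih =>
    cases i with
    | zero => exact ⟨SimpleGraph.Walk.nil, Nat.zero_le _⟩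
    | succ n =>
      obtain ⟨q', hq'⟩ := ih n
      exact ⟨SimpleGraph.Walk.cons h q', by simpa using Nat.succ_le_succ hq'⟩

lemma exists_walk_from_getVert {V : Type*} {G : SimpleGraph V} {u v : V}
    (p : G.Walk u v) (i : ℕ) : ∃ q : G.Walk (p.getVert i) v, q.length ≤ p.length - i := by
  induction p generalizing i with
  | nil => exact ⟨SimpleGraph.Walk.nil, Nat.zero_le _⟩
  | cons h q ih =>
    cases i with
    | zero => exact ⟨SimpleGraph.Walk.cons h q, by simp; exact Nat.le_refl _⟩
    | succ n =>
      obtain ⟨q', hq'⟩ := ih n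
      exact ⟨q', by simpa using hq'⟩

theorem p9_not_mayaTupi_and_tree_diameter_le_seven :
    ¬ IsMayaTupi path9 ∧
      ∀ (W : Type) [Fintype W] (G : SimpleGraph W), G.Connected → G.IsAcyclic →
        IsMayaTupi G → ∀ u v : W, G.dist u v ≤ 7 := by
  refine ⟨path9_not_mayaTupi, ?_⟩
  intro W _ G hconn _ hMT u v
  by_contra hlt
  push_neg at hlt
  have hd : 8 ≤ G.dist u v := hlt
  obtain ⟨p, hp⟩ := hconn.exists_walk_length_eq_dist u v
  -- distance to vertices of the walk
  have hdl : ∀ i : ℕ, G.dist u (p.getVert i) ≤ i := by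
    intro i
    obtain ⟨q, hq⟩ := exists_walk_to_getVert p i
    exact le_trans (SimpleGraph.dist_le q) hq
  have hdr : ∀ i : ℕ, G.dist (p.getVert i) v ≤ G.dist u v - i := by
    intro i
    obtain ⟨q, hq⟩ := exists_walk_from_getVert p i
    exact le_trans (SimpleGraph.dist_le q) (by omega)
  have hdeq : ∀ i : ℕ, i ≤ G.dist u v → G.dist u (p.getVert i) = i := by
    intro i hi
    have htri : G.dist u v ≤ G.dist u (p.getVert i) + G.dist (p.getVert i) v :=
      hconn.dist_triangle
    have h1 := hdl i
    have h2 := hdr i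
    omega
  -- injectivity
  have hinj : ∀ i j : ℕ, i ≤ G.dist u v → j ≤ G.dist u v →
      p.getVert i = p.getVert j → i = j := by
    intro i j hi hj heq
    have := hdeq i hi
    have := hdeq j hj
    rw [heq] at *
    omega
  -- no chords
  have hnoadj : ∀ i j : ℕ, i + 2 ≤ j → j ≤ G.dist u v →
      ¬ G.Adj (p.getVert i) (p.getVert j) := by
    intro i j hij hj hadj
    have h1 : G.dist (p.getVert i) (p.getVert j) ≤ 1 :=
      le_trans (SimpleGraph.dist_le (SimpleGraph.Walk.cons hadj SimpleGraph.Walk.nil))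
        (by simp)
    have htri1 : G.dist u v ≤ G.dist u (p.getVert j) + G.dist (p.getVert j) v :=
      hconn.dist_triangle
    have htri2 : G.dist u (p.getVert j)
        ≤ G.dist u (p.getVert i) + G.dist (p.getVert i) (p.getVert j) :=
      hconn.dist_triangle
    have h2 := hdl i
    have h3 := hdr j
    omega
  -- build the embedding of P9
  have hf : ∀ i j : Fin 9, G.Adj (p.getVert i) (p.getVert j) ↔ path9.Adj i j := by
    intro i j
    rw [path9_adj]
    constructor
    · intro hadj
      have hne : (i : ℕ) ≠ (j : ℕ) := by
        intro h
        have : p.getVert (i : ℕ) = p.getVert (j : ℕ) := by rw [h]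
        exact G.irrefl (this ▸ hadj)
      by_contra hc
      push_neg at hc
      rcases Nat.lt_or_ge (i : ℕ) (j : ℕ) with h | h
      · exact hnoadj i j (by omega) (by omega) hadj
      · exact hnoadj j i (by omega) (by omega) hadj.symm
    · intro hc
      rcases hc with h | h
      · have : (i : ℕ) < p.length := by omega
        have := p.adj_getVert_succ this
        rwa [h] at this
      · have : (j : ℕ) < p.length := by omega
        have := p.adj_getVert_succ this
        rw [h] at this
        exact this.symm
  have hinj' : Function.Injective (fun i : Fin 9 => p.getVert i) := by
    intro i j heq
    exact Fin.ext (hinj i j (by omega) (by omega) heq)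
  let emb : path9 ↪g G := ⟨⟨fun i : Fin 9 => p.getVert i, hinj'⟩, fun {i j} => hf i j⟩
  exact path9_not_mayaTupi (mayaTupi_of_embedding emb hMT)
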